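/- Let T be a contraction on a Hilbert space H, and set 𝒜 = SOT-lim_{n→∞} T*ⁿTⁿ (which exists since the sequence T*ⁿTⁿ is decreasing and bounded below by 0). Then T* 𝒜 T = 𝒜, and consequently the map V defined on Ran 𝒜^{1/2} by V(𝒜^{1/2}x) = 𝒜^{1/2}Tx is a well-defined isometry of Ran 𝒜^{1/2} (extending to an isometry of its closure). -/

import Mathlib

open ContinuousLinearMap

/-- Let `T` be a contraction and `𝒜 = SOT-lim T*ⁿTⁿ`.  Then `T* 𝒜 T = 𝒜`, and the map
`V (𝒜^{1/2} x) = 𝒜^{1/2} T x` is a well-defined isometry on `Ran 𝒜^{1/2}`, i.e.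
`‖𝒜^{1/2} T x‖ = ‖𝒜^{1/2} x‖` for all `x`. -/
theorem asymptotic_limit_isometry
    {H : Type*} [NormedAddCommGroup H] [InnerProductSpace ℂ H] [CompleteSpace H]
    (T A As : H →L[ℂ] H) (hT : ‖T‖ ≤ 1)
    (hA : ∀ x : H,
      Filter.Tendsto (fun n : ℕ => (((adjoint T) ^ n) ∘L (T ^ n)) x) Filter.atTop (nhds (A x)))
    (hAs : As.IsPositive) (hAs2 : As ∘L As = A) :
    adjoint T ∘L A ∘L T = A ∧ ∀ x : H, ‖As (T x)‖ = ‖As x‖ := by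
  have key : adjoint T ∘L A ∘L T = A := by
    ext x
    have h2 : Filter.Tendsto
        (fun n : ℕ => (adjoint T) ((((adjoint T) ^ n) ∘L (T ^ n)) (T x)))
        Filter.atTop (nhds ((adjoint T) (A (T x)))) :=
      ((adjoint T).continuous.tendsto _).comp (hA (T x))
    have h3 : ∀ n : ℕ, (adjoint T) ((((adjoint T) ^ n) ∘L (T ^ n)) (T x)) =
        (((adjoint T) ^ (n + 1)) ∘L (T ^ (n + 1))) x := by
      intro n
      simp only [comp_apply]
      rw [← ContinuousLinearMap.mul_apply, ← pow_succ',
        show (T ^ n) (T x) = (T ^ (n + 1)) x by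
          rw [← ContinuousLinearMap.mul_apply, ← pow_succ]]
    have h4 : Filter.Tendsto (fun n : ℕ => (((adjoint T) ^ (n + 1)) ∘L (T ^ (n + 1))) x)
        Filter.atTop (nhds (A x)) :=
      (hA x).comp (Filter.tendsto_add_atTop_nat 1)
    have h5 := h2.congr h3
    have := tendsto_nhds_unique h5 h4
    simpa using this
  refine ⟨key, fun x => ?_⟩
  have hsa : adjoint As = As := hAs.1.clm_adjoint_eq
  have norm_eq : ∀ y : H, ‖As y‖ ^ 2 = RCLike.re (inner ℂ y (A y) : ℂ) := by
    intro y
    rw [InnerProductSpace.norm_sq_eq_re_inner (𝕜 := ℂ)]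
    congr 1
    calc (inner ℂ (As y) (As y) : ℂ) = inner ℂ y ((adjoint As) (As y)) :=
          (adjoint_inner_right As y (As y)).symm
    _ = inner ℂ y (As (As y)) := by rw [hsa]
    _ = inner ℂ y (A y) := by rw [← hAs2]; rfl
  have h6 : (inner ℂ (T x) (A (T x)) : ℂ) = inner ℂ x (A x) := by
    conv_rhs => rw [← key]
    simp only [comp_apply]
    rw [adjoint_inner_right]
  have h7 : ‖As (T x)‖ ^ 2 = ‖As x‖ ^ 2 := by
    rw [norm_eq, norm_eq, h6]
  have := congrArg Real.sqrt h7
  simpa [Real.sqrt_sq, norm_nonneg] using this
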